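/- arXiv:2405.18283 — 3 statements merged into one kernel-verified Lean document; each statement's English description precedes it below -/
import Mathlib

section
/- For z ∈ (−π/4, π/4), define φ_C(z) := (Γ(1/4)²/(4√π)) · ₂F₁(−1/2, 3/2; 1; (cos z − sin z)²/2). Then φ_C solves the ODE φ'' − 2 tan(2z) φ' + 3φ = 0 on (−π/4, π/4). -/
set_option maxHeartbeats 1000000

open Real

/-- The rotationally invariant Jacobi field
`φ_C(z) = (Γ(1/4)²/(4√π)) · ₂F₁(−1/2, 3/2; 1; (cos z − sin z)²/2)` on `S³`. -/
noncomputable def phiC (z : ℝ) : ℝ :=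
  (Real.Gamma (1/4))^2 / (4 * Real.sqrt π) *
    (₂F₁ (-(1/2) : ℝ) (3/2) 1 ((Real.cos z - Real.sin z)^2 / 2) : ℝ)

noncomputable def kk (n : ℕ) : ℝ :=
  ((n.factorial : ℝ))⁻¹ * (ascPochhammer ℝ n).eval (-(1/2)) *
    (ascPochhammer ℝ n).eval (3/2) * ((ascPochhammer ℝ n).eval 1)⁻¹

lemma kk_zero : kk 0 = 1 := by simp [kk]

lemma kk_rec (n : ℕ) :
    ((n : ℝ) + 1)^2 * kk (n+1) = ((n : ℝ) - 1/2) * ((n : ℝ) + 3/2) * kk n := by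
  have hfact : ((n.factorial : ℝ)) ≠ 0 := by exact_mod_cast n.factorial_ne_zero
  have h1 : (ascPochhammer ℝ n).eval (1:ℝ) = (n.factorial : ℝ) := by
    simpa using ascPochhammer_eval_one ℝ n
  simp only [kk, ascPochhammer_succ_eval, Nat.factorial_succ, h1, Nat.cast_mul]
  push_cast
  field_simp
  ring

lemma kk_bound (n : ℕ) : |kk n| ≤ (n : ℝ) + 1 := by
  induction n with
  | zero => simp [kk_zero]
  | succ n ih =>
    have hrec := kk_rec n
    have hpos : (0:ℝ) < ((n:ℝ)+1)^2 := by positivity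
    have h1 : |kk (n+1)| = |((n : ℝ) - 1/2) * ((n : ℝ) + 3/2) * kk n| / ((n:ℝ)+1)^2 := by
      rw [← hrec, abs_mul, abs_of_pos hpos]
      field_simp
    rw [h1, abs_mul, abs_mul]
    have hn : (0:ℝ) ≤ (n:ℝ) := Nat.cast_nonneg n
    have ha : |((n : ℝ) - 1/2)| ≤ (n:ℝ) + 1 := by
      rw [abs_le]; constructor <;> linarith
    have hb : |((n : ℝ) + 3/2)| ≤ (n:ℝ) + 2 := by
      rw [abs_le]; constructor <;> linarith
    rw [div_le_iff₀ hpos]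
    have hab : |((n : ℝ) - 1/2)| * |((n : ℝ) + 3/2)| ≤ ((n:ℝ)+1) * ((n:ℝ)+2) :=
      mul_le_mul ha hb (abs_nonneg _) (by positivity)
    have habk : |((n : ℝ) - 1/2)| * |((n : ℝ) + 3/2)| * |kk n| ≤ ((n:ℝ)+1) * ((n:ℝ)+2) * ((n:ℝ)+1) :=
      mul_le_mul hab ih (abs_nonneg _) (by positivity)
    push_cast
    nlinarith [habk]

lemma summable_geomlike {x : ℝ} (hx : |x| < 1) (c : ℕ → ℝ)
    (hc : ∀ n, |c n| ≤ 20 * ((n:ℝ)+1)^4) : Summable (fun n => c n * x^n) := by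
  have hsum : Summable (fun n : ℕ => 20 * ((n:ℝ)+1)^4 * |x|^n) := by
    have h0 : Summable (fun n : ℕ => (n:ℝ)^0 * |x|^n) :=
      summable_pow_mul_geometric_of_norm_lt_one 0 (by simpa using hx)
    have h1 : Summable (fun n : ℕ => (n:ℝ)^1 * |x|^n) :=
      summable_pow_mul_geometric_of_norm_lt_one 1 (by simpa using hx)
    have h2 : Summable (fun n : ℕ => (n:ℝ)^2 * |x|^n) :=
      summable_pow_mul_geometric_of_norm_lt_one 2 (by simpa using hx)
    have h3 : Summable (fun n : ℕ => (n:ℝ)^3 * |x|^n) :=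
      summable_pow_mul_geometric_of_norm_lt_one 3 (by simpa using hx)
    have h4 : Summable (fun n : ℕ => (n:ℝ)^4 * |x|^n) :=
      summable_pow_mul_geometric_of_norm_lt_one 4 (by simpa using hx)
    have := (((h4.mul_left 20).add (h3.mul_left 80)).add ((h2.mul_left 120).add
      ((h1.mul_left 80).add (h0.mul_left 20))))
    refine this.congr fun n => ?_
    ring
  refine Summable.of_norm_bounded hsum fun n => ?_
  rw [norm_mul, norm_pow, Real.norm_eq_abs, Real.norm_eq_abs]
  have : (0:ℝ) ≤ |x|^n := by positivity
  exact mul_le_mul (hc n) le_rfl this (by positivity)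

lemma tsum_shift {f : ℕ → ℝ} (hf : Summable (fun n => f (n+1))) (h0 : f 0 = 0) :
    ∑' n, f n = ∑' n, f (n+1) := by
  have hsf : Summable f := (summable_nat_add_iff 1).mp hf
  rw [Summable.tsum_eq_zero_add hsf, h0, zero_add]

noncomputable def S0 (x : ℝ) : ℝ := ∑' n : ℕ, kk n * x^n
noncomputable def S1 (x : ℝ) : ℝ := ∑' n : ℕ, ((n:ℝ)+1) * kk (n+1) * x^n
noncomputable def S2 (x : ℝ) : ℝ := ∑' n : ℕ, ((n:ℝ)+2) * ((n:ℝ)+1) * kk (n+2) * x^n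

lemma kb1 (n : ℕ) : |kk (n+1)| ≤ (n:ℝ) + 2 := by
  have := kk_bound (n+1); push_cast at this ⊢; linarith

lemma kb2 (n : ℕ) : |kk (n+2)| ≤ (n:ℝ) + 3 := by
  have := kk_bound (n+2); push_cast at this ⊢; linarith

lemma summable_S0 {x : ℝ} (hx : |x| < 1) : Summable (fun n : ℕ => kk n * x^n) := by
  refine summable_geomlike hx _ fun n => ?_
  have := kk_bound n
  have h1 : (0:ℝ) ≤ (n:ℝ) := Nat.cast_nonneg n
  nlinarith [h1, this, abs_nonneg (kk n), mul_nonneg h1 h1, mul_nonneg (mul_nonneg h1 h1) h1, mul_nonneg (mul_nonneg (mul_nonneg h1 h1) h1) h1]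

lemma summable_S1 {x : ℝ} (hx : |x| < 1) :
    Summable (fun n : ℕ => ((n:ℝ)+1) * kk (n+1) * x^n) := by
  refine summable_geomlike hx _ fun n => ?_
  have := kb1 n
  have h1 : (0:ℝ) ≤ (n:ℝ) := Nat.cast_nonneg n
  rw [abs_mul]
  have h2 : |((n:ℝ)+1)| = (n:ℝ)+1 := abs_of_pos (by linarith)
  rw [h2]
  have h4 : ((n:ℝ)+1) * |kk (n+1)| ≤ ((n:ℝ)+1) * ((n:ℝ)+2) :=
    mul_le_mul le_rfl this (abs_nonneg _) (by positivity)
  nlinarith [h1, h4, mul_nonneg h1 h1, mul_nonneg (mul_nonneg h1 h1) h1, mul_nonneg (mul_nonneg (mul_nonneg h1 h1) h1) h1]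

lemma summable_S2 {x : ℝ} (hx : |x| < 1) :
    Summable (fun n : ℕ => ((n:ℝ)+2) * ((n:ℝ)+1) * kk (n+2) * x^n) := by
  refine summable_geomlike hx _ fun n => ?_
  have := kb2 n
  have h1 : (0:ℝ) ≤ (n:ℝ) := Nat.cast_nonneg n
  rw [abs_mul, abs_mul]
  have h2 : |((n:ℝ)+1)| = (n:ℝ)+1 := abs_of_pos (by linarith)
  have h3 : |((n:ℝ)+2)| = (n:ℝ)+2 := abs_of_pos (by linarith)
  rw [h2, h3]
  have h4 : ((n:ℝ)+2) * ((n:ℝ)+1) * |kk (n+2)| ≤ ((n:ℝ)+2) * ((n:ℝ)+1) * ((n:ℝ)+3) :=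
    mul_le_mul le_rfl this (abs_nonneg _) (by positivity)
  nlinarith [h1, h4, mul_nonneg h1 h1, mul_nonneg (mul_nonneg h1 h1) h1, mul_nonneg (mul_nonneg (mul_nonneg h1 h1) h1) h1]

lemma hasDerivAt_S0_aux {x : ℝ} (hx : |x| < 1) :
    HasDerivAt (fun y => ∑' n : ℕ, kk n * y^n)
      (∑' n : ℕ, kk n * ((n:ℝ) * x^(n-1))) x := by
  set r : ℝ := (1 + |x|)/2 with hr
  have hxr : |x| < r := by rw [hr]; linarith
  have hr0 : 0 < r := lt_of_le_of_lt (abs_nonneg x) hxr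
  have hr1 : r < 1 := by rw [hr]; linarith
  have hrabs : |r| < 1 := by rw [abs_of_pos hr0]; exact hr1
  refine hasDerivAt_tsum_of_isPreconnected
    (u := fun n : ℕ => ((n:ℝ)+1) * ((n:ℝ) * r^(n-1))) (y₀ := (0:ℝ))
    ?_ (Metric.isOpen_ball (x := (0:ℝ)) (ε := r)) (convex_ball (0:ℝ) r).isPreconnected
    (fun n y _ => ((hasDerivAt_pow n y).const_mul (kk n))) ?_ ?_ ?_ ?_
  · rw [← summable_nat_add_iff 1]
    have he : ∀ n : ℕ, (((n:ℝ)+2) * ((n:ℝ)+1)) * r^n =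
        (((n+1:ℕ):ℝ)+1) * (((n+1:ℕ):ℝ) * r^((n+1)-1)) := by
      intro n; push_cast; ring_nf
    refine Summable.congr (summable_geomlike hrabs (fun n => ((n:ℝ)+2) * ((n:ℝ)+1)) ?_) he
    intro n
    have h1 : (0:ℝ) ≤ (n:ℝ) := Nat.cast_nonneg n
    rw [abs_mul]
    have h2 : |((n:ℝ)+1)| = (n:ℝ)+1 := abs_of_pos (by linarith)
    have h3 : |((n:ℝ)+2)| = (n:ℝ)+2 := abs_of_pos (by linarith)
    rw [h2, h3]
    nlinarith [h1, mul_nonneg h1 h1, mul_nonneg (mul_nonneg h1 h1) h1, mul_nonneg (mul_nonneg (mul_nonneg h1 h1) h1) h1]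
  · intro n y hy
    rw [Metric.mem_ball, dist_zero_right, Real.norm_eq_abs] at hy
    rw [Real.norm_eq_abs, abs_mul, abs_mul]
    have h1 : |((n:ℝ))| = (n:ℝ) := abs_of_nonneg (Nat.cast_nonneg n)
    have h2 : |y|^(n-1) ≤ r^(n-1) := pow_le_pow_left₀ (abs_nonneg y) (le_of_lt hy) _
    rw [h1, abs_pow]
    have hkb := kk_bound n
    have hn0 : (0:ℝ) ≤ (n:ℝ) := Nat.cast_nonneg n
    have hinner : (n:ℝ) * |y|^(n-1) ≤ (n:ℝ) * r^(n-1) :=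
      mul_le_mul le_rfl h2 (by positivity) hn0
    exact mul_le_mul hkb hinner (by positivity) (by linarith)
  · exact Metric.mem_ball_self hr0
  · exact summable_S0 (by norm_num)
  · rwa [Metric.mem_ball, dist_zero_right, Real.norm_eq_abs]

lemma hasDerivAt_S0 {x : ℝ} (hx : |x| < 1) : HasDerivAt S0 (S1 x) x := by
  have key := hasDerivAt_S0_aux hx
  have heq : (∑' n : ℕ, kk n * ((n:ℝ) * x^(n-1))) = S1 x := by
    rw [S1]
    rw [tsum_shift ?hs (by simp)]
    case hs =>
      refine Summable.congr (summable_S1 hx) fun n => ?_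
      push_cast; ring
    exact tsum_congr fun n => by push_cast; ring
  rw [← heq]
  exact key

lemma hasDerivAt_S1 {x : ℝ} (hx : |x| < 1) : HasDerivAt S1 (S2 x) x := by
  set r : ℝ := (1 + |x|)/2 with hr
  have hxr : |x| < r := by rw [hr]; linarith
  have hr0 : 0 < r := lt_of_le_of_lt (abs_nonneg x) hxr
  have hr1 : r < 1 := by rw [hr]; linarith
  have hrabs : |r| < 1 := by rw [abs_of_pos hr0]; exact hr1
  have key : HasDerivAt (fun y => ∑' n : ℕ, ((n:ℝ)+1) * kk (n+1) * y^n)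
      (∑' n : ℕ, ((n:ℝ)+1) * kk (n+1) * ((n:ℝ) * x^(n-1))) x := by
    refine hasDerivAt_tsum_of_isPreconnected
      (u := fun n : ℕ => (((n:ℝ)+1) * ((n:ℝ)+2)) * ((n:ℝ) * r^(n-1))) (y₀ := (0:ℝ))
      ?_ (Metric.isOpen_ball (x := (0:ℝ)) (ε := r)) (convex_ball (0:ℝ) r).isPreconnected
      (fun n y _ => ((hasDerivAt_pow n y).const_mul (((n:ℝ)+1) * kk (n+1)))) ?_ ?_ ?_ ?_
    · rw [← summable_nat_add_iff 1]
      have he : ∀ n : ℕ, ((((n:ℝ)+2) * ((n:ℝ)+3)) * ((n:ℝ)+1)) * r^n =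
          ((((n+1:ℕ):ℝ)+1) * (((n+1:ℕ):ℝ)+2)) * (((n+1:ℕ):ℝ) * r^((n+1)-1)) := by
        intro n; push_cast; ring_nf
      refine Summable.congr
        (summable_geomlike hrabs (fun n => (((n:ℝ)+2) * ((n:ℝ)+3)) * ((n:ℝ)+1)) ?_) he
      intro n
      have h1 : (0:ℝ) ≤ (n:ℝ) := Nat.cast_nonneg n
      rw [abs_mul, abs_mul]
      have h2 : |((n:ℝ)+1)| = (n:ℝ)+1 := abs_of_pos (by linarith)
      have h3 : |((n:ℝ)+2)| = (n:ℝ)+2 := abs_of_pos (by linarith)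
      have h4 : |((n:ℝ)+3)| = (n:ℝ)+3 := abs_of_pos (by linarith)
      rw [h2, h3, h4]
      nlinarith [h1, mul_nonneg h1 h1, mul_nonneg (mul_nonneg h1 h1) h1,
        mul_nonneg (mul_nonneg (mul_nonneg h1 h1) h1) h1]
    · intro n y hy
      rw [Metric.mem_ball, dist_zero_right, Real.norm_eq_abs] at hy
      rw [Real.norm_eq_abs, abs_mul, abs_mul, abs_mul]
      have h1 : |((n:ℝ))| = (n:ℝ) := abs_of_nonneg (Nat.cast_nonneg n)
      have h2 : |y|^(n-1) ≤ r^(n-1) := pow_le_pow_left₀ (abs_nonneg y) (le_of_lt hy) _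
      rw [h1, abs_pow]
      have hkb := kb1 n
      have hn0 : (0:ℝ) ≤ (n:ℝ) := Nat.cast_nonneg n
      have hn1 : |((n:ℝ)+1)| = (n:ℝ)+1 := abs_of_pos (by linarith)
      rw [hn1]
      have hinner : (n:ℝ) * |y|^(n-1) ≤ (n:ℝ) * r^(n-1) :=
        mul_le_mul le_rfl h2 (by positivity) hn0
      have houter : ((n:ℝ)+1) * |kk (n+1)| ≤ ((n:ℝ)+1) * ((n:ℝ)+2) :=
        mul_le_mul le_rfl hkb (abs_nonneg _) (by linarith)
      exact mul_le_mul houter hinner (by positivity) (by positivity)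
    · exact Metric.mem_ball_self hr0
    · exact summable_S1 (by norm_num)
    · rwa [Metric.mem_ball, dist_zero_right, Real.norm_eq_abs]
  have heq : (∑' n : ℕ, ((n:ℝ)+1) * kk (n+1) * ((n:ℝ) * x^(n-1))) = S2 x := by
    rw [S2]
    rw [tsum_shift ?hs (by simp)]
    case hs =>
      refine Summable.congr (summable_S2 hx) fun n => ?_
      push_cast; ring
    exact tsum_congr fun n => by push_cast; ring
  rw [← heq]
  exact key

lemma summable_A {x : ℝ} (hx : |x| < 1) :
    Summable (fun n : ℕ => (((n:ℝ)+1) * (n:ℝ) * kk (n+1)) * x^n) := by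
  refine summable_geomlike hx _ fun n => ?_
  have h1 : (0:ℝ) ≤ (n:ℝ) := Nat.cast_nonneg n
  rw [abs_mul, abs_mul]
  have h2 : |((n:ℝ)+1)| = (n:ℝ)+1 := abs_of_pos (by linarith)
  have h3 : |(n:ℝ)| = (n:ℝ) := abs_of_nonneg h1
  rw [h2, h3]
  have h4 : ((n:ℝ)+1) * (n:ℝ) * |kk (n+1)| ≤ ((n:ℝ)+1) * (n:ℝ) * ((n:ℝ)+2) :=
    mul_le_mul le_rfl (kb1 n) (abs_nonneg _) (by positivity)
  nlinarith [h1, h4, mul_nonneg h1 h1, mul_nonneg (mul_nonneg h1 h1) h1,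
    mul_nonneg (mul_nonneg (mul_nonneg h1 h1) h1) h1]

lemma summable_C {x : ℝ} (hx : |x| < 1) :
    Summable (fun n : ℕ => ((n:ℝ) * ((n:ℝ)-1) * kk n) * x^n) := by
  refine summable_geomlike hx _ fun n => ?_
  have h1 : (0:ℝ) ≤ (n:ℝ) := Nat.cast_nonneg n
  rw [abs_mul, abs_mul]
  have h3 : |(n:ℝ)| = (n:ℝ) := abs_of_nonneg h1
  have h5 : |((n:ℝ)-1)| ≤ (n:ℝ)+1 := by rw [abs_le]; constructor <;> linarith
  rw [h3]
  have h4 : (n:ℝ) * |((n:ℝ)-1)| * |kk n| ≤ (n:ℝ) * ((n:ℝ)+1) * ((n:ℝ)+1) :=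
    mul_le_mul (mul_le_mul le_rfl h5 (abs_nonneg _) h1) (kk_bound n) (abs_nonneg _)
      (by positivity)
  nlinarith [h1, h4, mul_nonneg h1 h1, mul_nonneg (mul_nonneg h1 h1) h1,
    mul_nonneg (mul_nonneg (mul_nonneg h1 h1) h1) h1]

lemma summable_D {x : ℝ} (hx : |x| < 1) :
    Summable (fun n : ℕ => ((n:ℝ) * kk n) * x^n) := by
  refine summable_geomlike hx _ fun n => ?_
  have h1 : (0:ℝ) ≤ (n:ℝ) := Nat.cast_nonneg n
  rw [abs_mul]
  have h3 : |(n:ℝ)| = (n:ℝ) := abs_of_nonneg h1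
  rw [h3]
  have h4 : (n:ℝ) * |kk n| ≤ (n:ℝ) * ((n:ℝ)+1) :=
    mul_le_mul le_rfl (kk_bound n) (abs_nonneg _) h1
  nlinarith [h1, h4, mul_nonneg h1 h1, mul_nonneg (mul_nonneg h1 h1) h1,
    mul_nonneg (mul_nonneg (mul_nonneg h1 h1) h1) h1]

lemma ode_x {x : ℝ} (hx : |x| < 1) :
    x * (1 - x) * S2 x + (1 - 2*x) * S1 x + (3/4) * S0 x = 0 := by
  have step1 : x * S2 x = ∑' n : ℕ, (((n:ℝ)+1) * (n:ℝ) * kk (n+1)) * x^n := by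
    have hs : Summable (fun n : ℕ => ((((n+1:ℕ):ℝ)+1) * ((n+1:ℕ):ℝ) * kk (n+1+1)) * x^(n+1)) :=
      (summable_nat_add_iff (f := fun n : ℕ => (((n:ℝ)+1) * (n:ℝ) * kk (n+1)) * x^n) 1).mpr (summable_A hx)
    calc x * S2 x = ∑' n : ℕ, x * (((n:ℝ)+2) * ((n:ℝ)+1) * kk (n+2) * x^n) := by
          rw [S2, tsum_mul_left]
      _ = ∑' n : ℕ, ((((n+1:ℕ):ℝ)+1) * ((n+1:ℕ):ℝ) * kk (n+1+1)) * x^(n+1) :=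
          tsum_congr fun n => by push_cast [pow_succ]; ring
      _ = ∑' n : ℕ, (((n:ℝ)+1) * (n:ℝ) * kk (n+1)) * x^n :=
          (tsum_shift (f := fun n : ℕ => (((n:ℝ)+1) * (n:ℝ) * kk (n+1)) * x^n) hs
            (by simp)).symm
  have step2 : x^2 * S2 x = ∑' n : ℕ, ((n:ℝ) * ((n:ℝ)-1) * kk n) * x^n := by
    have hs1 : Summable (fun n : ℕ => (((n+1:ℕ):ℝ) * (((n+1:ℕ):ℝ)-1) * kk (n+1)) * x^(n+1)) :=
      (summable_nat_add_iff (f := fun n : ℕ => ((n:ℝ) * ((n:ℝ)-1) * kk n) * x^n) 1).mpr (summable_C hx)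
    have hs2 : Summable (fun n : ℕ => (((n+2:ℕ):ℝ) * (((n+2:ℕ):ℝ)-1) * kk (n+2)) * x^(n+2)) :=
      (summable_nat_add_iff (f := fun n : ℕ => ((n:ℝ) * ((n:ℝ)-1) * kk n) * x^n) 2).mpr (summable_C hx)
    have sh1 : (∑' n : ℕ, ((n:ℝ) * ((n:ℝ)-1) * kk n) * x^n)
        = ∑' n : ℕ, (((n+1:ℕ):ℝ) * (((n+1:ℕ):ℝ)-1) * kk (n+1)) * x^(n+1) :=
      tsum_shift hs1 (by simp)
    have sh2 : (∑' n : ℕ, (((n+1:ℕ):ℝ) * (((n+1:ℕ):ℝ)-1) * kk (n+1)) * x^(n+1))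
        = ∑' n : ℕ, (((n+2:ℕ):ℝ) * (((n+2:ℕ):ℝ)-1) * kk (n+2)) * x^(n+2) := by
      have := tsum_shift
        (f := fun n : ℕ => (((n+1:ℕ):ℝ) * (((n+1:ℕ):ℝ)-1) * kk (n+1)) * x^(n+1))
        (hs2.congr fun n => by push_cast; ring_nf) (by simp)
      rw [this]
    calc x^2 * S2 x = ∑' n : ℕ, x^2 * (((n:ℝ)+2) * ((n:ℝ)+1) * kk (n+2) * x^n) := by
          rw [S2, tsum_mul_left]
      _ = ∑' n : ℕ, (((n+2:ℕ):ℝ) * (((n+2:ℕ):ℝ)-1) * kk (n+2)) * x^(n+2) :=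
          tsum_congr fun n => by push_cast [pow_succ]; ring
      _ = ∑' n : ℕ, ((n:ℝ) * ((n:ℝ)-1) * kk n) * x^n := (sh1.trans sh2).symm
  have step3 : x * S1 x = ∑' n : ℕ, ((n:ℝ) * kk n) * x^n := by
    have hs : Summable (fun n : ℕ => (((n+1:ℕ):ℝ) * kk (n+1)) * x^(n+1)) :=
      (summable_nat_add_iff (f := fun n : ℕ => ((n:ℝ) * kk n) * x^n) 1).mpr (summable_D hx)
    calc x * S1 x = ∑' n : ℕ, x * (((n:ℝ)+1) * kk (n+1) * x^n) := by
          rw [S1, tsum_mul_left]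
      _ = ∑' n : ℕ, (((n+1:ℕ):ℝ) * kk (n+1)) * x^(n+1) :=
          tsum_congr fun n => by push_cast [pow_succ]; ring
      _ = ∑' n : ℕ, ((n:ℝ) * kk n) * x^n :=
          (tsum_shift (f := fun n : ℕ => ((n:ℝ) * kk n) * x^n) hs (by simp)).symm
  have expand : x * (1 - x) * S2 x + (1 - 2*x) * S1 x + (3/4) * S0 x
      = (x * S2 x - x^2 * S2 x) + (S1 x - 2 * (x * S1 x)) + (3/4) * S0 x := by ring
  rw [expand, step1, step2, step3, S1, S0]
  rw [← tsum_mul_left (a := (2:ℝ)), ← tsum_mul_left (a := ((3:ℝ)/4))]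
  rw [← Summable.tsum_sub (summable_A hx) (summable_C hx),
      ← Summable.tsum_sub (summable_S1 hx) ((summable_D hx).mul_left 2),
      ← Summable.tsum_add ((summable_A hx).sub (summable_C hx))
        ((summable_S1 hx).sub ((summable_D hx).mul_left 2)),
      ← Summable.tsum_add (((summable_A hx).sub (summable_C hx)).add
        ((summable_S1 hx).sub ((summable_D hx).mul_left 2)))
        ((summable_S0 hx).mul_left (3/4))]
  refine (tsum_congr fun n => ?_).trans tsum_zero
  linear_combination x^n * kk_rec n

noncomputable def qq (z : ℝ) : ℝ := (1 - Real.sin (2*z)) / 2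

lemma phiC_eq : phiC = fun z => (Real.Gamma (1/4))^2 / (4 * Real.sqrt π) * S0 (qq z) := by
  funext z
  unfold phiC S0 qq
  congr 1
  have harg : (Real.cos z - Real.sin z)^2 / 2 = (1 - Real.sin (2*z)) / 2 := by
    rw [Real.sin_two_mul]
    nlinarith [Real.sin_sq_add_cos_sq z]
  rw [harg, ordinaryHypergeometric]
  rw [ordinaryHypergeometric_sum_eq]
  exact tsum_congr fun n => by rw [smul_eq_mul]; rfl

lemma qq_hasDeriv (w : ℝ) : HasDerivAt qq (-(Real.cos (2*w))) w := by
  have h2 : HasDerivAt (fun x : ℝ => 2*x) 2 w := by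
    simpa using (hasDerivAt_id w).const_mul (2:ℝ)
  have hs : HasDerivAt (fun x : ℝ => Real.sin (2*x)) (Real.cos (2*w) * 2) w :=
    (Real.hasDerivAt_sin (2*w)).comp w h2
  have := (hs.const_sub 1).div_const 2
  refine this.congr_deriv ?_
  ring

lemma qq_mem {z : ℝ} (hz : z ∈ Set.Ioo (-(π/4)) (π/4)) : |qq z| < 1 := by
  obtain ⟨h1, h2⟩ := hz
  have hcos : 0 < Real.cos (2*z) :=
    Real.cos_pos_of_mem_Ioo ⟨by linarith, by linarith⟩
  have hsq := Real.sin_sq_add_cos_sq (2*z)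
  have habs : |Real.sin (2*z)| < 1 := by
    rw [abs_lt]; constructor <;> nlinarith
  rw [abs_lt] at habs ⊢
  unfold qq
  constructor <;> [linarith [habs.2]; linarith [habs.1]]

/-- `φ_C` solves the rotationally invariant Jacobi equation
`φ'' − 2 tan(2z) φ' + 3φ = 0` on `(−π/4, π/4)`. -/
theorem stmt2 :
    ∀ z ∈ Set.Ioo (-(π/4)) (π/4),
      deriv (deriv phiC) z - 2 * Real.tan (2*z) * deriv phiC z + 3 * phiC z = 0 := by
  intro z hz
  set CC : ℝ := (Real.Gamma (1/4))^2 / (4 * Real.sqrt π) with hCC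
  set phi1 : ℝ → ℝ := fun w => CC * (S1 (qq w) * (-(Real.cos (2*w)))) with hphi1
  have hphi' : ∀ w ∈ Set.Ioo (-(π/4)) (π/4), HasDerivAt phiC (phi1 w) w := by
    intro w hw
    rw [phiC_eq]
    have h := ((hasDerivAt_S0 (qq_mem hw)).comp w (qq_hasDeriv w)).const_mul CC
    show HasDerivAt (fun z => CC * S0 (qq z)) (CC * (S1 (qq w) * (-(Real.cos (2*w))))) w
    exact h
  have hcos2 : ∀ w : ℝ, HasDerivAt (fun w => -(Real.cos (2*w))) (2 * Real.sin (2*w)) w := by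
    intro w
    have h2 : HasDerivAt (fun x : ℝ => 2*x) 2 w := by
      simpa using (hasDerivAt_id w).const_mul (2:ℝ)
    have := ((Real.hasDerivAt_cos (2*w)).comp w h2).neg
    refine this.congr_deriv ?_
    ring
  have hphi1' : HasDerivAt phi1
      (CC * (S2 (qq z) * (Real.cos (2*z))^2 + S1 (qq z) * (2 * Real.sin (2*z)))) z := by
    have hS1q : HasDerivAt (fun w => S1 (qq w)) (S2 (qq z) * (-(Real.cos (2*z)))) z :=
      (hasDerivAt_S1 (qq_mem hz)).comp z (qq_hasDeriv z)
    have := (hS1q.mul (hcos2 z)).const_mul CC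
    refine this.congr_deriv ?_
    ring
  have hev : deriv phiC =ᶠ[nhds z] phi1 := by
    filter_upwards [isOpen_Ioo.mem_nhds hz] with w hw
    exact (hphi' w hw).deriv
  have hd2 : deriv (deriv phiC) z
      = CC * (S2 (qq z) * (Real.cos (2*z))^2 + S1 (qq z) * (2 * Real.sin (2*z))) := by
    rw [hev.deriv_eq]
    exact hphi1'.deriv
  have hd1 : deriv phiC z = phi1 z := (hphi' z hz).deriv
  rw [hd2, hd1, hphi1, phiC_eq]
  obtain ⟨h1, h2⟩ := hz
  have hcospos : 0 < Real.cos (2*z) :=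
    Real.cos_pos_of_mem_Ioo ⟨by linarith, by linarith⟩
  have htan : Real.tan (2*z) * Real.cos (2*z) = Real.sin (2*z) := by
    rw [Real.tan_eq_sin_div_cos]
    field_simp
  have hsin : Real.sin (2*z) = 1 - 2 * qq z := by unfold qq; ring
  have hcos2eq : (Real.cos (2*z))^2 = 4 * qq z * (1 - qq z) := by
    have hpy := Real.sin_sq_add_cos_sq (2*z)
    linear_combination hpy + (-(Real.sin (2*z) + 1 - 2 * qq z)) * hsin
  have hode := ode_x (qq_mem ⟨h1, h2⟩)
  simp only
  linear_combination 2*CC*(S1 (qq z))*htan + CC*(S2 (qq z))*hcos2eq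
    + 4*CC*(S1 (qq z))*hsin + 4*CC*hode
end

section
/- Under the substitution w = (1 − sin 2z)/2, any solution φ(z) of the ODE φ'' − 2 tan(2z) φ' + 3φ = 0 on (−π/4, π/4), viewed as a function of w, satisfies the hypergeometric equation w(1−w) φ_{ww} + (1 − 2w) φ_w + (3/4) φ = 0. -/
open Real

/-- Under the substitution `w = (1 − sin 2z)/2`, any solution `φ` of
`φ'' − 2 tan(2z) φ' + 3φ = 0` on `(−π/4, π/4)`, viewed as a function `ψ` of `w`,
satisfies the hypergeometric equation `w(1−w)ψ'' + (1−2w)ψ' + (3/4)ψ = 0` on `(0,1)`. -/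
theorem stmt3 (φ ψ : ℝ → ℝ)
    (hsub : ∀ z ∈ Set.Ioo (-(π/4)) (π/4), φ z = ψ ((1 - Real.sin (2*z)) / 2))
    (hψ1 : ∀ w ∈ Set.Ioo (0:ℝ) 1, DifferentiableAt ℝ ψ w)
    (hψ2 : ∀ w ∈ Set.Ioo (0:ℝ) 1, DifferentiableAt ℝ (deriv ψ) w)
    (hODE : ∀ z ∈ Set.Ioo (-(π/4)) (π/4),
      deriv (deriv φ) z - 2 * Real.tan (2*z) * deriv φ z + 3 * φ z = 0) :
    ∀ w ∈ Set.Ioo (0:ℝ) 1,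
      w * (1 - w) * deriv (deriv ψ) w + (1 - 2*w) * deriv ψ w + (3/4) * ψ w = 0 := by
  intro w hw
  set g : ℝ → ℝ := fun z => (1 - Real.sin (2*z)) / 2 with hgdef
  have hIoo_open : IsOpen (Set.Ioo (-(π/4)) (π/4)) := isOpen_Ioo
  have hpi : (0:ℝ) < π := Real.pi_pos
  -- 2z ∈ (-π/2, π/2)
  have h2z : ∀ z ∈ Set.Ioo (-(π/4)) (π/4), 2*z ∈ Set.Ioo (-(π/2)) (π/2) := by
    intro z hz
    obtain ⟨h1, h2⟩ := hz
    constructor <;> [linarith; linarith]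
  -- g maps into (0,1)
  have hmap : ∀ z ∈ Set.Ioo (-(π/4)) (π/4), g z ∈ Set.Ioo (0:ℝ) 1 := by
    intro z hz
    obtain ⟨h1, h2⟩ := h2z z hz
    have hs1 : Real.sin (2*z) < 1 := by
      have := Real.strictMonoOn_sin (a := 2*z) (b := π/2)
        (by constructor <;> [linarith; linarith]) (by constructor <;> [linarith; linarith]) h2
      simpa using this
    have hs2 : -1 < Real.sin (2*z) := by
      have := Real.strictMonoOn_sin (a := -(π/2)) (b := 2*z)
        (by constructor <;> [linarith; linarith]) (by constructor <;> [linarith; linarith]) h1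
      simpa using this
    constructor
    · simp only [hgdef]; linarith
    · simp only [hgdef]; linarith
  -- derivative of g
  have hg' : ∀ z : ℝ, HasDerivAt g (-(Real.cos (2*z))) z := by
    intro z
    have h2 : HasDerivAt (fun z : ℝ => 2*z) 2 z := by
      simpa using (hasDerivAt_id z).const_mul (2:ℝ)
    have hsin : HasDerivAt (fun z : ℝ => Real.sin (2*z)) (Real.cos (2*z) * 2) z :=
      (Real.hasDerivAt_sin (2*z)).comp z h2
    have := ((hasDerivAt_const z (1:ℝ)).sub hsin).div_const 2
    exact this.congr_deriv (by ring)
  -- first derivative of φ on the interval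
  have hφ' : ∀ z ∈ Set.Ioo (-(π/4)) (π/4),
      deriv φ z = deriv ψ (g z) * (-(Real.cos (2*z))) := by
    intro z hz
    have hev : φ =ᶠ[nhds z] fun x => ψ (g x) := by
      filter_upwards [hIoo_open.mem_nhds hz] with x hx
      exact hsub x hx
    have hcomp : HasDerivAt (fun x => ψ (g x)) (deriv ψ (g z) * (-(Real.cos (2*z)))) z :=
      ((hψ1 (g z) (hmap z hz)).hasDerivAt).comp z (hg' z)
    rw [hev.deriv_eq, hcomp.deriv]
  -- second derivative of φ on the interval
  have hφ'' : ∀ z ∈ Set.Ioo (-(π/4)) (π/4),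
      deriv (deriv φ) z = (deriv (deriv ψ) (g z) * (-(Real.cos (2*z)))) * (-(Real.cos (2*z)))
        + deriv ψ (g z) * (Real.sin (2*z) * 2) := by
    intro z hz
    have hev : deriv φ =ᶠ[nhds z] fun x => deriv ψ (g x) * (-(Real.cos (2*x))) := by
      filter_upwards [hIoo_open.mem_nhds hz] with x hx
      exact hφ' x hx
    have h2 : HasDerivAt (fun z : ℝ => 2*z) 2 z := by
      simpa using (hasDerivAt_id z).const_mul (2:ℝ)
    have hcos : HasDerivAt (fun x : ℝ => -(Real.cos (2*x))) (Real.sin (2*z) * 2) z := by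
      have := ((Real.hasDerivAt_cos (2*z)).comp z h2).neg
      exact this.congr_deriv (by ring)
    have hψ'g : HasDerivAt (fun x => deriv ψ (g x))
        (deriv (deriv ψ) (g z) * (-(Real.cos (2*z)))) z :=
      ((hψ2 (g z) (hmap z hz)).hasDerivAt).comp z (hg' z)
    have hprod := hψ'g.mul hcos
    rw [hev.deriv_eq]; exact hprod.deriv
  -- choose z₀ with g z₀ = w
  obtain ⟨hw0, hw1⟩ := hw
  set s : ℝ := 1 - 2*w with hsdef
  have hs_mem : -1 < s ∧ s < 1 := by constructor <;> [simp only [hsdef]; simp only [hsdef]] <;> linarith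
  set z₀ : ℝ := Real.arcsin s / 2 with hz₀def
  have h2z₀ : 2 * z₀ = Real.arcsin s := by rw [hz₀def]; ring
  have hz₀mem : z₀ ∈ Set.Ioo (-(π/4)) (π/4) := by
    have h1 : -(π/2) < Real.arcsin s := Real.neg_pi_div_two_lt_arcsin.mpr (by linarith [hs_mem.1])
    have h2 : Real.arcsin s < π/2 := Real.arcsin_lt_pi_div_two.mpr (by linarith [hs_mem.2])
    constructor <;> simp only [hz₀def] <;> linarith
  have hsin : Real.sin (2*z₀) = s := by
    rw [h2z₀]
    exact Real.sin_arcsin (by linarith [hs_mem.1]) (by linarith [hs_mem.2])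
  have hgz₀ : g z₀ = w := by
    simp only [hgdef, hsin, hsdef]; ring
  have hcos_pos : 0 < Real.cos (2*z₀) := by
    apply Real.cos_pos_of_mem_Ioo
    exact h2z z₀ hz₀mem
  have hcos_sq : Real.cos (2*z₀) ^ 2 = 4 * w * (1 - w) := by
    have := Real.sin_sq_add_cos_sq (2*z₀)
    rw [hsin] at this
    simp only [hsdef] at this ⊢
    nlinarith
  have htan : Real.tan (2*z₀) = s / Real.cos (2*z₀) := by
    rw [Real.tan_eq_sin_div_cos, hsin]
  -- plug into ODE
  have hode := hODE z₀ hz₀mem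
  rw [hφ'' z₀ hz₀mem, hφ' z₀ hz₀mem, hsub z₀ hz₀mem] at hode
  have hgz₀' : (1 - Real.sin (2*z₀)) / 2 = w := by rw [hsin, hsdef]; ring
  rw [hgz₀, hgz₀', hsin, htan] at hode
  set A := deriv (deriv ψ) w
  set B := deriv ψ w
  set C := ψ w
  have hc : Real.cos (2*z₀) ≠ 0 := ne_of_gt hcos_pos
  have key : A * (4 * w * (1 - w)) + 4 * s * B + 3 * C = 0 := by
    have hode2 : A * Real.cos (2*z₀)^2 + 2*s*B + 2*s*B + 3*C = 0 := by
      field_simp at hode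
      nlinarith [hode]
    rw [hcos_sq] at hode2
    linarith
  simp only [hsdef] at key
  linear_combination key / 4
end

section
/- The constant F₀ := Γ(1/4)⁴/(8π²) satisfies 2.18 < F₀ < 2.19. -/
set_option maxRecDepth 100000
set_option maxHeartbeats 1000000

open Real

/-- Auxiliary product: `pAux n = ∏_{k=0}^{n-1} (4k+1)`. -/
def pAux : ℕ → ℕ
  | 0 => 1
  | n+1 => pAux n * (4*n+1)

/-- The literal value of `4^1000`. -/
def F4 : ℕ := 114813069527425452423283320117768198402231770208869520047764273682576626139237031385665948631650626991844596463898746277344711896086305533142593135616665318539129989145312280000688779148240044871428926990063486244781615463646388363947317026040466353970904996558162398808944629605623311649536164221970332681344168908984458505602379484807914058900934776500429002716706625830522008132236281291761267883317206598995396418127021779858404042159853183251540889433902091920554957783589672039160081957216630582755380425583726015528348786419432054508915275783882625175435528800822842770817965453762184851149029376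

lemma F4_eq : (4:ℕ)^1000 = F4 := by decide

lemma pAux_pos (n : ℕ) : 0 < pAux n := by
  induction n with
  | zero => simp [pAux]
  | succ n ih => exact Nat.mul_pos ih (by omega)

lemma natA : 218*8*3141593^2*4001^3*(pAux 1000)^4
    < (Nat.factorial 1000)^4*F4^4*64*10^14 := by decide

lemma natB : (Nat.factorial 999)^4*1000*F4^4*10^14
    < 219*8*3141592^2*(pAux 1000)^4 := by decide

lemma pAux_key (n : ℕ) :
    Real.Gamma (1/4 + n) * 4^n = Real.Gamma (1/4) * (pAux n : ℝ) := by
  induction n with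
  | zero => simp [pAux]
  | succ n ih =>
    have h : (1/4 + (n:ℝ)) ≠ 0 := by positivity
    have hstep : Real.Gamma (1/4 + ((n:ℕ)+1:ℕ)) = (1/4 + n) * Real.Gamma (1/4 + n) := by
      rw [show ((1:ℝ)/4 + ((n:ℕ)+1:ℕ)) = (1/4 + n) + 1 by push_cast; ring,
        Real.Gamma_add_one h]
    rw [hstep, pAux]
    push_cast
    rw [pow_succ]
    linear_combination (4*(n:ℝ)+1) * ih

lemma lemA (x : ℝ) (hx : 0 < x) :
    Real.Gamma (x + 1/4) ≤ Real.Gamma x * x ^ ((1:ℝ)/4) := by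
  have hΓ := Real.Gamma_pos_of_pos hx
  have h := Real.Gamma_mul_add_mul_le_rpow_Gamma_mul_rpow_Gamma
    (s := x) (t := x+1) (a := 3/4) (b := 1/4) hx (by linarith) (by norm_num)
    (by norm_num) (by norm_num)
  rw [show (3/4*x + 1/4*(x+1)) = x + 1/4 by ring, Real.Gamma_add_one hx.ne'] at h
  calc Real.Gamma (x + 1/4) ≤ Real.Gamma x ^ ((3:ℝ)/4) * (x * Real.Gamma x) ^ ((1:ℝ)/4) := h
    _ = Real.Gamma x * x ^ ((1:ℝ)/4) := by
        rw [Real.mul_rpow hx.le hΓ.le, mul_comm (x ^ ((1:ℝ)/4)) _, ← mul_assoc,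
          ← Real.rpow_add hΓ]
        norm_num

lemma lemB (x : ℝ) (hx : 0 < x) :
    Real.Gamma (x + 1) ≤ Real.Gamma (x + 1/4) * (x + 1/4) ^ ((3:ℝ)/4) := by
  have hq : (0:ℝ) < x + 1/4 := by linarith
  have hΓ := Real.Gamma_pos_of_pos hq
  have h := Real.Gamma_mul_add_mul_le_rpow_Gamma_mul_rpow_Gamma
    (s := x+1/4) (t := x+5/4) (a := 1/4) (b := 3/4) hq (by linarith) (by norm_num)
    (by norm_num) (by norm_num)
  rw [show (1/4*(x+1/4) + 3/4*(x+5/4)) = x + 1 by ring,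
    show x + 5/4 = (x + 1/4) + 1 by ring, Real.Gamma_add_one hq.ne'] at h
  calc Real.Gamma (x + 1)
      ≤ Real.Gamma (x+1/4) ^ ((1:ℝ)/4) * ((x+1/4) * Real.Gamma (x+1/4)) ^ ((3:ℝ)/4) := h
    _ = Real.Gamma (x + 1/4) * (x + 1/4) ^ ((3:ℝ)/4) := by
        rw [Real.mul_rpow hq.le hΓ.le, mul_comm ((x+1/4) ^ ((3:ℝ)/4)) _, ← mul_assoc,
          ← Real.rpow_add hΓ]
        norm_num

lemma rpow14_pow4 (y : ℝ) (hy : 0 ≤ y) : (y ^ ((1:ℝ)/4))^4 = y := by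
  rw [← Real.rpow_natCast (y ^ ((1:ℝ)/4)) 4, ← Real.rpow_mul hy]
  norm_num

lemma rpow34_pow4 (y : ℝ) (hy : 0 ≤ y) : (y ^ ((3:ℝ)/4))^4 = y^3 := by
  rw [← Real.rpow_natCast (y ^ ((3:ℝ)/4)) 4, ← Real.rpow_mul hy,
    show ((3:ℝ)/4 * ((4:ℕ):ℝ)) = ((3:ℕ):ℝ) by norm_num, Real.rpow_natCast]

lemma gU : Real.Gamma (1/4) * (pAux 1000 : ℝ)
    ≤ (Nat.factorial 999 : ℝ) * (1000:ℝ) ^ ((1:ℝ)/4) * 4^1000 := by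
  have hkey := pAux_key 1000
  push_cast at hkey
  have hA := lemA 1000 (by norm_num)
  rw [show Real.Gamma (1000:ℝ) = (Nat.factorial 999 : ℝ) by
    rw [show (1000:ℝ) = ((999:ℕ):ℝ) + 1 by norm_num, Real.Gamma_nat_eq_factorial]] at hA
  have h4p : (0:ℝ) < 4^1000 := by positivity
  calc Real.Gamma (1/4) * (pAux 1000 : ℝ) = Real.Gamma (1/4 + 1000) * 4^1000 := hkey.symm
    _ = Real.Gamma ((1000:ℝ) + 1/4) * 4^1000 := by rw [add_comm (1/4:ℝ) 1000]
    _ ≤ (Nat.factorial 999 : ℝ) * (1000:ℝ) ^ ((1:ℝ)/4) * 4^1000 := by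
        apply mul_le_mul_of_nonneg_right hA h4p.le

lemma gL : (Nat.factorial 1000 : ℝ) * 4^1000
    ≤ Real.Gamma (1/4) * (pAux 1000 : ℝ) * ((1000:ℝ) + 1/4) ^ ((3:ℝ)/4) := by
  have hkey := pAux_key 1000
  push_cast at hkey
  have hB := lemB 1000 (by norm_num)
  rw [show Real.Gamma ((1000:ℝ) + 1) = (Nat.factorial 1000 : ℝ) by
    rw [show (1000:ℝ) = ((1000:ℕ):ℝ) by norm_num, Real.Gamma_nat_eq_factorial]] at hB
  have h4p : (0:ℝ) < 4^1000 := by positivity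
  calc (Nat.factorial 1000 : ℝ) * 4^1000
      ≤ Real.Gamma ((1000:ℝ) + 1/4) * ((1000:ℝ) + 1/4) ^ ((3:ℝ)/4) * 4^1000 :=
        mul_le_mul_of_nonneg_right hB h4p.le
    _ = Real.Gamma (1/4 + 1000) * 4^1000 * ((1000:ℝ) + 1/4) ^ ((3:ℝ)/4) := by
        rw [add_comm (1/4:ℝ) 1000]; ring
    _ = Real.Gamma (1/4) * (pAux 1000 : ℝ) * ((1000:ℝ) + 1/4) ^ ((3:ℝ)/4) := by rw [hkey]

/-- The flux constant `F₀ := Γ(1/4)⁴/(8π²)` satisfies `2.18 < F₀ < 2.19`. -/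
theorem stmt5 :
    2.18 < Real.Gamma (1/4)^4 / (8 * π^2) ∧ Real.Gamma (1/4)^4 / (8 * π^2) < 2.19 := by
  have hg : 0 < Real.Gamma (1/4) := Real.Gamma_pos_of_pos (by norm_num)
  have hCnat := pAux_pos 1000
  have hC : (0:ℝ) < (pAux 1000 : ℝ) := by exact_mod_cast hCnat
  have hπpos := Real.pi_pos
  have hπlt : π < 3.141593 := Real.pi_lt_d6
  have hπgt : (3.141592:ℝ) < π := Real.pi_gt_d6
  -- fourth powers of the bounds
  have hU4 : Real.Gamma (1/4)^4 * (pAux 1000 : ℝ)^4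
      ≤ (Nat.factorial 999 : ℝ)^4 * 1000 * (4:ℝ)^4000 := by
    have h := pow_le_pow_left₀ (by positivity) gU 4
    calc Real.Gamma (1/4)^4 * (pAux 1000 : ℝ)^4
        = (Real.Gamma (1/4) * (pAux 1000 : ℝ))^4 := by ring
      _ ≤ ((Nat.factorial 999 : ℝ) * (1000:ℝ) ^ ((1:ℝ)/4) * 4^1000)^4 := h
      _ = (Nat.factorial 999 : ℝ)^4 * ((1000:ℝ) ^ ((1:ℝ)/4))^4 * ((4:ℝ)^1000)^4 := by ring
      _ = (Nat.factorial 999 : ℝ)^4 * 1000 * (4:ℝ)^4000 := by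
          rw [rpow14_pow4 1000 (by norm_num), ← pow_mul]
  have hL4 : (Nat.factorial 1000 : ℝ)^4 * (4:ℝ)^4000 * 64
      ≤ Real.Gamma (1/4)^4 * (pAux 1000 : ℝ)^4 * 4001^3 := by
    have h := pow_le_pow_left₀ (by positivity) gL 4
    have h2 : (Nat.factorial 1000 : ℝ)^4 * (4:ℝ)^4000
        ≤ Real.Gamma (1/4)^4 * (pAux 1000 : ℝ)^4 * (4001^3/64) := by
      calc (Nat.factorial 1000 : ℝ)^4 * (4:ℝ)^4000
          = ((Nat.factorial 1000 : ℝ) * 4^1000)^4 := by rw [mul_pow, ← pow_mul]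
        _ ≤ (Real.Gamma (1/4) * (pAux 1000 : ℝ) * ((1000:ℝ) + 1/4) ^ ((3:ℝ)/4))^4 := h
        _ = Real.Gamma (1/4)^4 * (pAux 1000 : ℝ)^4 * (((1000:ℝ) + 1/4) ^ ((3:ℝ)/4))^4 := by
            ring
        _ = Real.Gamma (1/4)^4 * (pAux 1000 : ℝ)^4 * (4001^3/64) := by
            rw [rpow34_pow4 _ (by norm_num)]
            norm_num
    linarith
  -- cast the numeric facts
  have hF44 : ((F4:ℕ):ℝ)^4 = (4:ℝ)^4000 := by
    rw [← F4_eq]; push_cast; rw [← pow_mul]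
  have hA' : (218*8*3141593^2*4001^3:ℝ) * (pAux 1000 : ℝ)^4
      < (Nat.factorial 1000 : ℝ)^4 * (4:ℝ)^4000 * 64 * 10^14 := by
    have h2 : ((218*8*3141593^2*4001^3*(pAux 1000)^4 : ℕ) : ℝ)
        < (((Nat.factorial 1000)^4*F4^4*64*10^14 : ℕ) : ℝ) := by exact_mod_cast natA
    push_cast at h2
    rw [hF44] at h2
    linarith
  have hB' : (Nat.factorial 999 : ℝ)^4 * 1000 * (4:ℝ)^4000 * 10^14
      < (219*8*3141592^2:ℝ) * (pAux 1000 : ℝ)^4 := by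
    have h2 : (((Nat.factorial 999)^4*1000*F4^4*10^14 : ℕ) : ℝ)
        < ((219*8*3141592^2*(pAux 1000)^4 : ℕ) : ℝ) := by exact_mod_cast natB
    push_cast at h2
    rw [hF44] at h2
    linarith
  have hπ2lt : π^2 < (3.141593:ℝ)^2 := by nlinarith
  have hπ2gt : (3.141592:ℝ)^2 < π^2 := by nlinarith
  constructor
  · -- lower bound
    rw [lt_div_iff₀ (by positivity)]
    have hcancel : (218*8*3141593^2/10^14:ℝ) * ((pAux 1000 : ℝ)^4 * 4001^3)
        < Real.Gamma (1/4)^4 * ((pAux 1000 : ℝ)^4 * 4001^3) := by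
      linear_combination (1/10^14:ℝ) * hA' + hL4
    have hmain : (218*8*3141593^2/10^14:ℝ) < Real.Gamma (1/4)^4 :=
      lt_of_mul_lt_mul_right hcancel (by positivity)
    nlinarith [hmain, hπ2lt]
  · -- upper bound
    rw [div_lt_iff₀ (by positivity)]
    have hcancel : (Real.Gamma (1/4)^4 * 10^14) * (pAux 1000 : ℝ)^4
        < (219*8*3141592^2:ℝ) * (pAux 1000 : ℝ)^4 := by
      linear_combination (10^14:ℝ) * hU4 + hB'
    have hmain : Real.Gamma (1/4)^4 * 10^14 < (219*8*3141592^2:ℝ) :=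
      lt_of_mul_lt_mul_right hcancel (by positivity)
    nlinarith [hmain, hπ2gt]
end
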